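/- (Gaussian component of the variational filtering update.) Let P := ∑_{z} f(z)·Σ(z)⁻¹ (which is positive definite), Σ̄ := P⁻¹, m̄ := Σ̄·( ∑_{z} f(z)·Σ(z)⁻¹·m(z) ), log ζ := ∑_{z} f(z)·log g(m̄ | z) + (1/2)·log det(2π·Σ̄), and let ḡ be the Gaussian density with mean m̄ and covariance Σ̄. Then for every measurable probability density q : ℝ^d → ℝ with respect to Lebesgue measure (q ≥ 0, ∫ q = 1) such that the function x ↦ q(x)·( ∑_z f(z)·log g(x | z) − log q(x) ) (set to 0 where q(x) = 0) is Lebesgue-integrable, one has ∑_{z} f(z)·∫_{ℝ^d} log( g(x | z)/q(x) )·q(x) dx ≤ log ζ, with equality if and only if q = ḡ Lebesgue-almost everywhere. In particular the Gaussian ḡ is the relative-entropy-optimal mean-field update for the continuous state component, and the attained maximal value is log ζ. -/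

import Mathlib

set_option linter.unusedSectionVars false
set_option maxHeartbeats 1000000

open MeasureTheory Matrix
open scoped BigOperators

/-- The Gaussian density on `ℝ^d` with mean `m` and (positive definite) covariance `S`:
`g(x) = det(2π·S)^{-1/2} · exp(−(1/2)·(x−m)ᵀ S⁻¹ (x−m))`. -/
noncomputable def gaussianDensity {d : ℕ} (m : Fin d → ℝ)
    (S : Matrix (Fin d) (Fin d) ℝ) (x : Fin d → ℝ) : ℝ :=
  ((2 * Real.pi) • S).det ^ (-(1 : ℝ) / 2) *
    Real.exp (-(1 / 2) * ((x - m) ⬝ᵥ S⁻¹.mulVec (x - m)))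

section MatrixHelpers
variable {ι κ : Type*} [Fintype ι] [DecidableEq ι] [Fintype κ]

lemma transpose_eq_of_herm {A : Matrix ι ι ℝ} (hA : A.IsHermitian) : Aᵀ = A := by
  have := hA.eq; rwa [Matrix.conjTranspose_eq_transpose_of_trivial] at this

lemma isHermitian_of_transpose_eq {A : Matrix ι ι ℝ} (h : Aᵀ = A) : A.IsHermitian := by
  show Aᴴ = A
  ext i j
  rw [Matrix.conjTranspose_apply]
  have : A j i = A i j := by conv_lhs => rw [← h, Matrix.transpose_apply]
  simpa using this

lemma symm_mulVec_dotProduct {C : Matrix ι ι ℝ} (hCt : Cᵀ = C) (u v : ι → ℝ) :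
    (C *ᵥ u) ⬝ᵥ v = u ⬝ᵥ C *ᵥ v := by
  rw [Matrix.dotProduct_mulVec, ← Matrix.mulVec_transpose, hCt, dotProduct_comm]

lemma symm_dotProduct_swap {A : Matrix ι ι ℝ} (hA : A.IsHermitian) (x y : ι → ℝ) :
    x ⬝ᵥ A *ᵥ y = y ⬝ᵥ A *ᵥ x := by
  rw [← symm_mulVec_dotProduct (transpose_eq_of_herm hA), dotProduct_comm]

lemma dotp_nonneg {B : Matrix ι ι ℝ} (hB : B.PosSemidef) (v : ι → ℝ) :
    0 ≤ v ⬝ᵥ B *ᵥ v := by simpa using hB.dotProduct_mulVec_nonneg v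

lemma dotp_pos {B : Matrix ι ι ℝ} (hB : B.PosDef) {v : ι → ℝ} (hv : v ≠ 0) :
    0 < v ⬝ᵥ B *ᵥ v := by simpa using hB.dotProduct_mulVec_pos hv

lemma quad_expand {A : Matrix ι ι ℝ} (hA : A.IsHermitian) (x y : ι → ℝ) :
    (x + y) ⬝ᵥ A *ᵥ (x + y) =
      x ⬝ᵥ A *ᵥ x + 2 * (x ⬝ᵥ A *ᵥ y) + y ⬝ᵥ A *ᵥ y := by
  rw [Matrix.mulVec_add, add_dotProduct, dotProduct_add,
    dotProduct_add, symm_dotProduct_swap hA y x]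
  ring

lemma quad_le_sum_abs (B : Matrix ι ι ℝ) (v : ι → ℝ) :
    v ⬝ᵥ B *ᵥ v ≤ (∑ i, ∑ j, |B i j|) * (v ⬝ᵥ v) := by
  have hsq : ∀ i, v i * v i ≤ v ⬝ᵥ v := fun i =>
    Finset.single_le_sum (f := fun k => v k * v k)
      (fun k _ => mul_self_nonneg _) (Finset.mem_univ i)
  have key : ∀ i j, v i * (B i j * v j) ≤ |B i j| * (v ⬝ᵥ v) := by
    intro i j
    have h1 : v i * (B i j * v j) ≤ |B i j| * (|v i| * |v j|) := by
      calc v i * (B i j * v j) ≤ |v i * (B i j * v j)| := le_abs_self _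
        _ = |B i j| * (|v i| * |v j|) := by rw [abs_mul, abs_mul]; ring
    have h2 : |v i| * |v j| ≤ v ⬝ᵥ v := by
      nlinarith [hsq i, hsq j, abs_mul_abs_self (v i), abs_mul_abs_self (v j),
        sq_nonneg (|v i| - |v j|), abs_nonneg (v i), abs_nonneg (v j)]
    nlinarith [abs_nonneg (B i j)]
  calc v ⬝ᵥ B *ᵥ v = ∑ i, ∑ j, v i * (B i j * v j) := by
        simp [dotProduct, Matrix.mulVec, Finset.mul_sum]
    _ ≤ ∑ i, ∑ j, |B i j| * (v ⬝ᵥ v) :=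
        Finset.sum_le_sum fun i _ => Finset.sum_le_sum fun j _ => key i j
    _ = (∑ i, ∑ j, |B i j|) * (v ⬝ᵥ v) := by rw [Finset.sum_mul]; simp [Finset.sum_mul]

lemma posdef_sqrt_exists {P : Matrix ι ι ℝ} (hP : P.PosDef) :
    ∃ C : Matrix ι ι ℝ, Cᵀ = C ∧ C * C = P ∧ C.det ≠ 0 := by
  classical
  open scoped MatrixOrder in
  refine ⟨CFC.sqrt P, transpose_eq_of_herm (CFC.sqrt_nonneg P).posSemidef.isHermitian,
    CFC.sqrt_mul_sqrt_self P hP.posSemidef.nonneg, ?_⟩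
  intro h0
  have : P.det = 0 := by
    open scoped MatrixOrder in
    rw [← CFC.sqrt_mul_sqrt_self P hP.posSemidef.nonneg, Matrix.det_mul, h0, mul_zero]
  exact (ne_of_gt hP.det_pos) this

lemma posdef_lower {P : Matrix ι ι ℝ} (hP : P.PosDef) :
    ∃ c : ℝ, 0 < c ∧ ∀ v : ι → ℝ, v ⬝ᵥ v ≤ c * (v ⬝ᵥ P *ᵥ v) := by
  classical
  obtain ⟨C, hCt, hCC, hCdet⟩ := posdef_sqrt_exists hP
  refine ⟨(∑ i, ∑ j, |P⁻¹ i j|) + 1, by positivity, fun v => ?_⟩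
  have hv1 : (C *ᵥ v) ⬝ᵥ P⁻¹ *ᵥ (C *ᵥ v) = v ⬝ᵥ v := by
    have hPinv : P⁻¹ * C = C⁻¹ := by
      rw [← hCC, Matrix.mul_inv_rev, Matrix.mul_assoc,
        Matrix.nonsing_inv_mul _ (isUnit_iff_ne_zero.mpr hCdet), Matrix.mul_one]
    rw [Matrix.mulVec_mulVec, hPinv, symm_mulVec_dotProduct hCt, Matrix.mulVec_mulVec,
      Matrix.mul_nonsing_inv _ (isUnit_iff_ne_zero.mpr hCdet), Matrix.one_mulVec]
  have hv2 : (C *ᵥ v) ⬝ᵥ (C *ᵥ v) = v ⬝ᵥ P *ᵥ v := by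
    rw [symm_mulVec_dotProduct hCt, Matrix.mulVec_mulVec, hCC]
  calc v ⬝ᵥ v = (C *ᵥ v) ⬝ᵥ P⁻¹ *ᵥ (C *ᵥ v) := hv1.symm
    _ ≤ (∑ i, ∑ j, |P⁻¹ i j|) * ((C *ᵥ v) ⬝ᵥ (C *ᵥ v)) := quad_le_sum_abs _ _
    _ = (∑ i, ∑ j, |P⁻¹ i j|) * (v ⬝ᵥ P *ᵥ v) := by rw [hv2]
    _ ≤ ((∑ i, ∑ j, |P⁻¹ i j|) + 1) * (v ⬝ᵥ P *ᵥ v) := by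
        have h1 : 0 ≤ v ⬝ᵥ P *ᵥ v := dotp_nonneg hP.posSemidef v
        nlinarith

lemma sum_mulVec' (A : κ → Matrix ι ι ℝ) (w : ι → ℝ) :
    (∑ z, A z) *ᵥ w = ∑ z, (A z) *ᵥ w := by
  classical
  induction (Finset.univ : Finset κ) using Finset.induction_on with
  | empty => simp [Matrix.zero_mulVec]
  | insert a s hz ih => simp [Finset.sum_insert hz, Matrix.add_mulVec, ih]

lemma dotProduct_sum' (u : ι → ℝ) (v : κ → ι → ℝ) :
    u ⬝ᵥ (∑ z, v z) = ∑ z, u ⬝ᵥ v z := by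
  classical
  induction (Finset.univ : Finset κ) using Finset.induction_on with
  | empty => simp
  | insert a s hz ih => simp [Finset.sum_insert hz, dotProduct_add, ih]

lemma dotProduct_weighted_sum (c : κ → ℝ) (A : κ → Matrix ι ι ℝ) (u w : ι → ℝ) :
    u ⬝ᵥ (∑ z, c z • A z) *ᵥ w = ∑ z, c z * (u ⬝ᵥ (A z) *ᵥ w) := by
  rw [sum_mulVec', dotProduct_sum']
  congr 1; funext z
  rw [Matrix.smul_mulVec, dotProduct_smul, smul_eq_mul]

lemma posdef_smul {A : Matrix ι ι ℝ} (hA : A.PosDef) {c : ℝ} (hc : 0 < c) :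
    (c • A).PosDef := by
  refine Matrix.PosDef.of_dotProduct_mulVec_pos (isHermitian_of_transpose_eq ?_) fun v hv => ?_
  · rw [Matrix.transpose_smul, transpose_eq_of_herm hA.isHermitian]
  · have h1 : star v ⬝ᵥ (c • A) *ᵥ v = c * (v ⬝ᵥ A *ᵥ v) := by
      rw [Matrix.smul_mulVec]
      simp [dotProduct_smul]
    rw [h1]
    exact mul_pos hc (dotp_pos hA hv)

lemma quad_comparison {P B : Matrix ι ι ℝ}
    (hP : P.PosDef) (hB : B.PosSemidef) (mz mb : ι → ℝ) :
    ∃ α β : ℝ, 0 ≤ α ∧ 0 ≤ β ∧ ∀ x : ι → ℝ,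
      (x - mz) ⬝ᵥ B *ᵥ (x - mz) ≤ α * ((x - mb) ⬝ᵥ P *ᵥ (x - mb)) + β := by
  obtain ⟨c, hc, hcv⟩ := posdef_lower hP
  set K := ∑ i, ∑ j, |B i j| with hK
  have hK0 : 0 ≤ K := Finset.sum_nonneg fun i _ => Finset.sum_nonneg fun j _ => abs_nonneg _
  refine ⟨2 * (K * c), 2 * ((mb - mz) ⬝ᵥ B *ᵥ (mb - mz)), by positivity, ?_, fun x => ?_⟩
  · have := dotp_nonneg hB (mb - mz); linarith
  have hxz : x - mz = (x - mb) + (mb - mz) := (sub_add_sub_cancel x mb mz).symm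
  set t := x - mb with ht
  set δ := mb - mz with hδ
  have e1 : (t + δ) ⬝ᵥ B *ᵥ (t + δ)
      = t ⬝ᵥ B *ᵥ t + 2 * (t ⬝ᵥ B *ᵥ δ) + δ ⬝ᵥ B *ᵥ δ := quad_expand hB.isHermitian t δ
  have e2 : (t + -δ) ⬝ᵥ B *ᵥ (t + -δ)
      = t ⬝ᵥ B *ᵥ t + 2 * (t ⬝ᵥ B *ᵥ (-δ)) + (-δ) ⬝ᵥ B *ᵥ (-δ) := quad_expand hB.isHermitian t (-δ)
  have e2' : 0 ≤ t ⬝ᵥ B *ᵥ t - 2 * (t ⬝ᵥ B *ᵥ δ) + δ ⬝ᵥ B *ᵥ δ := by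
    have hn := dotp_nonneg hB (t + -δ)
    rw [e2] at hn
    simpa [Matrix.mulVec_neg, dotProduct_neg, neg_dotProduct, ← sub_eq_add_neg] using hn
  have h1 : t ⬝ᵥ B *ᵥ t ≤ K * (t ⬝ᵥ t) := quad_le_sum_abs B t
  have h2 : t ⬝ᵥ t ≤ c * (t ⬝ᵥ P *ᵥ t) := hcv t
  have h3 : t ⬝ᵥ B *ᵥ t ≤ K * (c * (t ⬝ᵥ P *ᵥ t)) :=
    le_trans h1 (mul_le_mul_of_nonneg_left h2 hK0)
  rw [hxz, e1]
  nlinarith [e2', h3, dotp_nonneg hB δ, dotp_nonneg hB t]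

end MatrixHelpers

section GaussianHelpers
variable {d : ℕ}

lemma sqrt_pow_nat {t : ℝ} (ht : 0 ≤ t) (n : ℕ) : Real.sqrt (t ^ n) = Real.sqrt t ^ n := by
  induction n with
  | zero => simp
  | succ k ih => rw [pow_succ, pow_succ, Real.sqrt_mul (pow_nonneg ht k), ih]

lemma gaussian_int {d : ℕ} (m : Fin d → ℝ)
    {A : Matrix (Fin d) (Fin d) ℝ} (hA : A.PosDef) :
    Integrable (gaussianDensity m A) ∧ (∫ x : Fin d → ℝ, gaussianDensity m A x) = 1 := by
  classical
  obtain ⟨C, hCt, hCC, hCdet⟩ := posdef_sqrt_exists hA.inv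
  have ha : 0 < A.det := hA.det_pos
  have hquad : ∀ v : Fin d → ℝ, v ⬝ᵥ A⁻¹ *ᵥ v = (C *ᵥ v) ⬝ᵥ (C *ᵥ v) := by
    intro v
    rw [symm_mulVec_dotProduct hCt, Matrix.mulVec_mulVec, hCC]
  set φ : (Fin d → ℝ) → ℝ := fun w => ∏ i, Real.exp (-(1/2) * (w i)^2) with hφ
  have hφint : Integrable φ :=
    Integrable.fintype_prod (f := fun _ t => Real.exp (-(1/2) * t^2)) fun i =>
      integrable_exp_neg_mul_sq (by norm_num : (0:ℝ) < 1/2)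
  have hφeq : ∀ w : Fin d → ℝ, φ w = Real.exp (-(1/2) * (w ⬝ᵥ w)) := by
    intro w
    show (∏ i, Real.exp (-(1/2) * (w i)^2)) = _
    rw [← Real.exp_sum]
    congr 1
    rw [dotProduct, Finset.mul_sum]
    exact Finset.sum_congr rfl fun i _ => by ring
  have hφval : (∫ w : Fin d → ℝ, φ w) = Real.sqrt (2 * Real.pi) ^ d := by
    show (∫ w : Fin d → ℝ, ∏ i, Real.exp (-(1/2) * (w i)^2)) = _
    rw [MeasureTheory.volume_pi, MeasureTheory.integral_fintype_prod_eq_pow (ι := Fin d) (fun t : ℝ => Real.exp (-(1/2) * t^2)),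
      integral_gaussian (1/2), Fintype.card_fin,
      show Real.pi / (1/2) = 2 * Real.pi by ring]
  have hCcont : Continuous (Matrix.toLin' C) := LinearMap.continuous_on_pi _
  have hmap : Measure.map (Matrix.toLin' C) volume
      = ENNReal.ofReal |C.det⁻¹| • volume :=
    Real.map_matrix_volume_pi_eq_smul_volume_pi hCdet
  have hφmapint : Integrable φ (Measure.map (Matrix.toLin' C) volume) := by
    rw [hmap]
    exact hφint.smul_measure ENNReal.ofReal_ne_top
  have hψint : Integrable (fun x => φ (C *ᵥ x)) := by
    have := (integrable_map_measure hφmapint.aestronglyMeasurable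
      hCcont.measurable.aemeasurable).mp hφmapint
    simpa [Function.comp_def, Matrix.toLin'_apply] using this
  have hψval : (∫ x : Fin d → ℝ, φ (C *ᵥ x)) = |C.det|⁻¹ * Real.sqrt (2 * Real.pi) ^ d := by
    have h1 : (∫ y, φ y ∂(Measure.map (Matrix.toLin' C) volume))
        = ∫ x, φ ((Matrix.toLin' C) x) :=
      integral_map hCcont.measurable.aemeasurable hφmapint.aestronglyMeasurable
    have h3 : (∫ x : Fin d → ℝ, φ (C *ᵥ x)) = ∫ x, φ ((Matrix.toLin' C) x) := by
      simp [Matrix.toLin'_apply]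
    rw [h3, ← h1, hmap, integral_smul_measure, ENNReal.toReal_ofReal (abs_nonneg _),
      hφval, abs_inv]
    simp
  set K : ℝ := ((2 * Real.pi) • A).det ^ (-(1 : ℝ) / 2) with hK
  have hgd : gaussianDensity m A = fun x => K * φ (C *ᵥ (x - m)) := by
    funext x
    rw [gaussianDensity, hφeq, ← hquad]
  have hint : Integrable (gaussianDensity m A) := by
    rw [hgd]
    exact ((hψint.const_mul K).comp_sub_right m)
  refine ⟨hint, ?_⟩
  have hval : (∫ x : Fin d → ℝ, gaussianDensity m A x)
      = K * (|C.det|⁻¹ * Real.sqrt (2 * Real.pi) ^ d) := by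
    rw [hgd]
    rw [integral_sub_right_eq_self (fun x => K * φ (C *ᵥ x)) m]
    rw [integral_const_mul, hψval]
  rw [hval]
  have hdetC : |C.det| = Real.sqrt (A.det)⁻¹ := by
    have h1 : C.det * C.det = (A.det)⁻¹ := by
      rw [← Matrix.det_mul, hCC, Matrix.det_nonsing_inv, Ring.inverse_eq_inv']
    have h2 : |C.det| * |C.det| = (A.det)⁻¹ := by rw [← abs_mul, h1, abs_of_pos (by positivity)]
    nlinarith [Real.sq_sqrt (le_of_lt (inv_pos.mpr ha)), Real.sqrt_nonneg (A.det)⁻¹,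
      abs_nonneg C.det, Real.sqrt_mul_self (le_of_lt (inv_pos.mpr ha))]
  have hKval : K = ((Real.sqrt (2 * Real.pi)) ^ d * Real.sqrt A.det)⁻¹ := by
    rw [hK, Matrix.det_smul, Fintype.card_fin]
    have hpos : (0:ℝ) < (2 * Real.pi) ^ d * A.det := by positivity
    rw [show (-(1:ℝ)/2) = -(1/2) by norm_num, Real.rpow_neg (le_of_lt hpos),
      ← Real.sqrt_eq_rpow, Real.sqrt_mul (by positivity), sqrt_pow_nat (by positivity)]
  rw [hKval, hdetC, Real.sqrt_inv]
  have h2π : (0:ℝ) < Real.sqrt (2 * Real.pi) := Real.sqrt_pos.mpr (by positivity)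
  have hsa : (0:ℝ) < Real.sqrt A.det := Real.sqrt_pos.mpr ha
  field_simp

lemma gibbs_pt {a b : ℝ} (ha : 0 < a) (hb : 0 ≤ b) :
    b * (Real.log a - Real.log b) ≤ a - b := by
  rcases eq_or_lt_of_le hb with h0 | h0
  · simp [← h0]; positivity
  · have hlog : Real.log (a / b) ≤ a / b - 1 :=
      Real.log_le_sub_one_of_pos (div_pos ha h0)
    rw [Real.log_div (ne_of_gt ha) (ne_of_gt h0)] at hlog
    have := mul_le_mul_of_nonneg_left hlog hb
    calc b * (Real.log a - Real.log b) ≤ b * (a / b - 1) := this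
      _ = a - b := by field_simp

lemma gibbs_pt_strict {a b : ℝ} (ha : 0 < a) (hb : 0 < b) (hne : a ≠ b) :
    b * (Real.log a - Real.log b) < a - b := by
  have h1 : a / b ≠ 1 := by
    intro h; exact hne (by field_simp at h; linarith)
  have hlog : Real.log (a / b) < a / b - 1 :=
    Real.log_lt_sub_one_of_pos (div_pos ha hb) h1
  rw [Real.log_div (ne_of_gt ha) (ne_of_gt hb)] at hlog
  have := mul_lt_mul_of_pos_left hlog hb
  calc b * (Real.log a - Real.log b) < b * (a / b - 1) := this
    _ = a - b := by field_simp

lemma det2pi_pos {A : Matrix (Fin d) (Fin d) ℝ} (hA : A.PosDef) :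
    0 < ((2 * Real.pi) • A).det :=
  (posdef_smul hA (by positivity)).det_pos

lemma gaussianDensity_pos {A : Matrix (Fin d) (Fin d) ℝ} (hA : A.PosDef)
    (m x : Fin d → ℝ) : 0 < gaussianDensity m A x :=
  mul_pos (Real.rpow_pos_of_pos (det2pi_pos hA) _) (Real.exp_pos _)

lemma log_gaussianDensity {A : Matrix (Fin d) (Fin d) ℝ} (hA : A.PosDef)
    (m x : Fin d → ℝ) :
    Real.log (gaussianDensity m A x)
      = (-(1:ℝ)/2) * Real.log (((2 * Real.pi) • A).det)
        + (-(1/2)) * ((x - m) ⬝ᵥ A⁻¹ *ᵥ (x - m)) := by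
  rw [gaussianDensity, Real.log_mul (ne_of_gt (Real.rpow_pos_of_pos (det2pi_pos hA) _))
    (Real.exp_ne_zero _), Real.log_rpow (det2pi_pos hA), Real.log_exp]

lemma quadform_continuous (m : Fin d → ℝ) (A : Matrix (Fin d) (Fin d) ℝ) :
    Continuous fun x : Fin d → ℝ => (x - m) ⬝ᵥ A *ᵥ (x - m) := by
  have hsub : Continuous fun x : Fin d → ℝ => x - m :=
    continuous_pi fun i => (continuous_apply i).sub continuous_const
  have h2 : Continuous fun y : Fin d → ℝ => y ⬝ᵥ A *ᵥ y := by
    unfold dotProduct Matrix.mulVec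
    exact continuous_finset_sum _ fun i _ => (continuous_apply i).mul
      (continuous_finset_sum _ fun j _ => continuous_const.mul (continuous_apply j))
  exact h2.comp hsub

lemma gaussianDensity_continuous (m : Fin d → ℝ) (A : Matrix (Fin d) (Fin d) ℝ) :
    Continuous (gaussianDensity m A) := by
  apply Continuous.mul continuous_const
  exact Real.continuous_exp.comp (continuous_const.mul (quadform_continuous m A⁻¹))

end GaussianHelpers

theorem gaussian_variational_filtering_update
    (d M : ℕ) (hM : 1 ≤ M)
    (f : Fin M → ℝ) (hf0 : ∀ z, 0 ≤ f z) (hf1 : (∑ z, f z) = 1)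
    (m : Fin M → Fin d → ℝ)
    (S : Fin M → Matrix (Fin d) (Fin d) ℝ) (hS : ∀ z, (S z).PosDef) :
    let P : Matrix (Fin d) (Fin d) ℝ := ∑ z, f z • (S z)⁻¹
    let Sbar := P⁻¹
    let mbar := Sbar.mulVec (∑ z, f z • (S z)⁻¹.mulVec (m z))
    let logζ := (∑ z, f z * Real.log (gaussianDensity (m z) (S z) mbar))
      + (1 / 2) * Real.log (((2 * Real.pi) • Sbar).det)
    P.PosDef ∧
      ∀ q : (Fin d → ℝ) → ℝ, Measurable q → (∀ x, 0 ≤ q x) →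
        (∫ x : Fin d → ℝ, q x) = 1 →
        Integrable
          (fun x : Fin d → ℝ =>
            if q x = 0 then 0
            else q x * ((∑ z, f z * Real.log (gaussianDensity (m z) (S z) x))
              - Real.log (q x))) →
        (∑ z, f z *
            ∫ x : Fin d → ℝ,
              Real.log (gaussianDensity (m z) (S z) x / q x) * q x) ≤ logζ
          ∧ ((∑ z, f z *
                ∫ x : Fin d → ℝ,
                  Real.log (gaussianDensity (m z) (S z) x / q x) * q x) = logζ
              ↔ q =ᵐ[volume] gaussianDensity mbar Sbar) := by
  classical
  intro P Sbar mbar logζ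
  have hBz : ∀ z, ((S z)⁻¹).PosDef := fun z => (hS z).inv
  have hPdef : P = ∑ z, f z • (S z)⁻¹ := rfl
  have hquadP : ∀ u w : Fin d → ℝ, u ⬝ᵥ P *ᵥ w = ∑ z, f z * (u ⬝ᵥ (S z)⁻¹ *ᵥ w) := by
    intro u w; rw [hPdef, dotProduct_weighted_sum]
  have hPt : Pᵀ = P := by
    rw [hPdef, Matrix.transpose_sum]
    exact Finset.sum_congr rfl fun z _ => by
      rw [Matrix.transpose_smul, transpose_eq_of_herm (hBz z).isHermitian]
  have hz0 : ∃ z₀ : Fin M, 0 < f z₀ := by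
    by_contra hcon
    push_neg at hcon
    have : (∑ z, f z) = 0 :=
      Finset.sum_eq_zero fun z _ => le_antisymm (hcon z) (hf0 z)
    rw [hf1] at this; norm_num at this
  have hP : P.PosDef := by
    refine Matrix.PosDef.of_dotProduct_mulVec_pos (isHermitian_of_transpose_eq hPt) fun v hv => ?_
    have hstar : star v = v := funext fun i => by simp
    rw [hstar, hquadP]
    obtain ⟨z₀, hz₀⟩ := hz0
    have hterm : 0 < f z₀ * (v ⬝ᵥ (S z₀)⁻¹ *ᵥ v) := mul_pos hz₀ (dotp_pos (hBz z₀) hv)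
    exact lt_of_lt_of_le hterm (Finset.single_le_sum
      (fun z _ => mul_nonneg (hf0 z) (dotp_nonneg (hBz z).posSemidef v)) (Finset.mem_univ z₀))
  have hSbar : Sbar.PosDef := hP.inv
  have hPdetU : IsUnit P.det := isUnit_iff_ne_zero.mpr (ne_of_gt hP.det_pos)
  have hSbarInv : Sbar⁻¹ = P := Matrix.nonsing_inv_nonsing_inv P hPdetU
  have hPmbar : P *ᵥ mbar = ∑ z, f z • (S z)⁻¹.mulVec (m z) := by
    show P *ᵥ (Sbar *ᵥ _) = _
    rw [Matrix.mulVec_mulVec, Matrix.mul_nonsing_inv P hPdetU, Matrix.one_mulVec]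
  -- the quadratic identity
  have hQI : ∀ x : Fin d → ℝ,
      (∑ z, f z * ((x - m z) ⬝ᵥ (S z)⁻¹ *ᵥ (x - m z)))
        = (x - mbar) ⬝ᵥ P *ᵥ (x - mbar)
          + ∑ z, f z * ((mbar - m z) ⬝ᵥ (S z)⁻¹ *ᵥ (mbar - m z)) := by
    intro x
    have hmid : (∑ z, f z * ((x - mbar) ⬝ᵥ (S z)⁻¹ *ᵥ (mbar - m z))) = 0 := by
      have h1 : ∀ z : Fin M, f z * ((x - mbar) ⬝ᵥ (S z)⁻¹ *ᵥ (mbar - m z))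
          = (x - mbar) ⬝ᵥ (f z • ((S z)⁻¹ *ᵥ mbar))
            - (x - mbar) ⬝ᵥ (f z • ((S z)⁻¹ *ᵥ (m z))) := by
        intro z
        rw [Matrix.mulVec_sub, dotProduct_sub, dotProduct_smul,
          dotProduct_smul]
        simp only [smul_eq_mul]
        ring
      rw [Finset.sum_congr rfl fun z _ => h1 z, Finset.sum_sub_distrib,
        ← dotProduct_sum', ← dotProduct_sum']
      have h2 : (∑ z, f z • ((S z)⁻¹ *ᵥ mbar)) = P *ᵥ mbar := by
        rw [hPdef, sum_mulVec']
        exact Finset.sum_congr rfl fun z _ => (Matrix.smul_mulVec _ _ _).symm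
      rw [h2, hPmbar]
      simp
    have hexp : ∀ z : Fin M, f z * ((x - m z) ⬝ᵥ (S z)⁻¹ *ᵥ (x - m z))
        = f z * ((x - mbar) ⬝ᵥ (S z)⁻¹ *ᵥ (x - mbar))
          + (2 * (f z * ((x - mbar) ⬝ᵥ (S z)⁻¹ *ᵥ (mbar - m z)))
            + f z * ((mbar - m z) ⬝ᵥ (S z)⁻¹ *ᵥ (mbar - m z))) := by
      intro z
      rw [show x - m z = (x - mbar) + (mbar - m z) from (sub_add_sub_cancel x mbar (m z)).symm,
        quad_expand (hBz z).isHermitian]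
      ring
    rw [Finset.sum_congr rfl fun z _ => hexp z, Finset.sum_add_distrib, Finset.sum_add_distrib,
      ← Finset.mul_sum, hmid, ← hquadP]
    ring
  -- the key identity
  have hsum_logs : ∀ x : Fin d → ℝ,
      (∑ z, f z * Real.log (gaussianDensity (m z) (S z) x))
        = (∑ z, f z * ((-(1:ℝ)/2) * Real.log (((2 * Real.pi) • S z).det)))
          + (-(1:ℝ)/2) * (∑ z, f z * ((x - m z) ⬝ᵥ (S z)⁻¹ *ᵥ (x - m z))) := by
    intro x
    have h1 : ∀ z : Fin M, f z * Real.log (gaussianDensity (m z) (S z) x)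
        = f z * ((-(1:ℝ)/2) * Real.log (((2 * Real.pi) • S z).det))
          + (-(1:ℝ)/2) * (f z * ((x - m z) ⬝ᵥ (S z)⁻¹ *ᵥ (x - m z))) := by
      intro z
      rw [log_gaussianDensity (hS z)]
      ring
    rw [Finset.sum_congr rfl fun z _ => h1 z, Finset.sum_add_distrib, ← Finset.mul_sum]
  have hKI : ∀ x : Fin d → ℝ,
      (∑ z, f z * Real.log (gaussianDensity (m z) (S z) x))
        = Real.log (gaussianDensity mbar Sbar x) + logζ := by
    intro x
    have hbar : Real.log (gaussianDensity mbar Sbar x)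
        = (-(1:ℝ)/2) * Real.log (((2 * Real.pi) • Sbar).det)
          + (-(1/2)) * ((x - mbar) ⬝ᵥ P *ᵥ (x - mbar)) := by
      rw [log_gaussianDensity hSbar, hSbarInv]
    have hζ : logζ = (∑ z, f z * Real.log (gaussianDensity (m z) (S z) mbar))
        + (1 / 2) * Real.log (((2 * Real.pi) • Sbar).det) := rfl
    have hQmm : (mbar - mbar) ⬝ᵥ P *ᵥ (mbar - mbar) = 0 := by
      simp
    rw [hsum_logs x, hbar, hζ, hsum_logs mbar, hQI x, hQI mbar, hQmm]
    ring
  refine ⟨hP, ?_⟩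
  intro q hqm hq0 hq1 hH
  -- q is integrable
  have hqInt : Integrable q := by
    by_contra hc
    rw [integral_undef hc] at hq1
    norm_num at hq1
  -- relative entropy integrand
  set h : (Fin d → ℝ) → ℝ := fun x =>
    if q x = 0 then 0
    else q x * (Real.log (gaussianDensity mbar Sbar x) - Real.log (q x)) with hh
  have hHeq : (fun x : Fin d → ℝ =>
      if q x = 0 then 0
      else q x * ((∑ z, f z * Real.log (gaussianDensity (m z) (S z) x)) - Real.log (q x)))
      = fun x => h x + logζ * q x := by
    funext x
    by_cases hx : q x = 0
    · simp [hh, hx]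
    · rw [if_neg hx]
      simp only [hh, if_neg hx]
      rw [hKI x]
      ring
  have hhInt : Integrable h := by
    have h2 := hH
    rw [hHeq] at h2
    have h3 := h2.sub (hqInt.const_mul logζ)
    exact h3.congr (Filter.Eventually.of_forall fun x => by simp)
  -- pointwise Gibbs inequality
  have hGibbs : ∀ x, h x ≤ gaussianDensity mbar Sbar x - q x := by
    intro x
    by_cases hx : q x = 0
    · simp only [hh, if_pos hx, hx, sub_zero]
      exact le_of_lt (gaussianDensity_pos hSbar mbar x)
    · simp only [hh, if_neg hx]
      exact gibbs_pt (gaussianDensity_pos hSbar mbar x) (hq0 x)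
  obtain ⟨hgbarInt, hgbarVal⟩ := gaussian_int mbar hSbar
  have hgq : Integrable (fun x => gaussianDensity mbar Sbar x - q x) := hgbarInt.sub hqInt
  have hIh_le : (∫ x, h x) ≤ 0 := by
    have hmono := integral_mono hhInt hgq hGibbs
    rw [integral_sub hgbarInt hqInt, hgbarVal, hq1] at hmono
    simpa using hmono
  -- moment bound via the wider gaussian p
  have h2S : ((2:ℝ) • Sbar).PosDef := posdef_smul hSbar two_pos
  obtain ⟨hpInt, hpVal⟩ := gaussian_int mbar h2S
  have hinv2 : ((2:ℝ) • Sbar)⁻¹ = (2:ℝ)⁻¹ • P := by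
    have : Invertible (2:ℝ) := invertibleOfNonzero two_ne_zero
    rw [Matrix.inv_smul (k := (2:ℝ)) (A := Sbar)
      (isUnit_iff_ne_zero.mpr (ne_of_gt hSbar.det_pos)), hSbarInv,
      invOf_eq_inv (2:ℝ)]
  have hlogp : ∀ x, Real.log (gaussianDensity mbar ((2:ℝ) • Sbar) x)
      = (-(1:ℝ)/2) * Real.log (((2 * Real.pi) • ((2:ℝ) • Sbar)).det)
        + (-(1:ℝ)/4) * ((x - mbar) ⬝ᵥ P *ᵥ (x - mbar)) := by
    intro x
    rw [log_gaussianDensity h2S, hinv2]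
    have hq2 : (x - mbar) ⬝ᵥ ((2:ℝ)⁻¹ • P) *ᵥ (x - mbar)
        = 2⁻¹ * ((x - mbar) ⬝ᵥ P *ᵥ (x - mbar)) := by
      rw [Matrix.smul_mulVec, dotProduct_smul]
      simp
    rw [hq2]
    ring
  set ap : ℝ := (-(1:ℝ)/2) * Real.log (((2 * Real.pi) • ((2:ℝ) • Sbar)).det) with hap
  set ab : ℝ := (-(1:ℝ)/2) * Real.log (((2 * Real.pi) • Sbar).det) with hab
  have hΦbound : ∀ x, q x * ((x - mbar) ⬝ᵥ P *ᵥ (x - mbar))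
      ≤ 4 * (gaussianDensity mbar ((2:ℝ) • Sbar) x - q x - h x + (ab - ap) * q x) := by
    intro x
    by_cases hx : q x = 0
    · simp only [hh, if_pos hx, hx, mul_zero, zero_mul, sub_zero, add_zero]
      have := gaussianDensity_pos h2S mbar x
      nlinarith
    · have hg1 := gibbs_pt (gaussianDensity_pos h2S mbar x) (hq0 x)
      rw [hlogp x] at hg1
      have hhx : h x = q x * ((ab + (-(1:ℝ)/2) * ((x - mbar) ⬝ᵥ P *ᵥ (x - mbar)))
          - Real.log (q x)) := by
        simp only [hh, if_neg hx]
        rw [log_gaussianDensity hSbar, hSbarInv, ← hab]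
        ring_nf
      rw [hhx]
      nlinarith [hg1]
  have hΦInt : Integrable (fun x => q x * ((x - mbar) ⬝ᵥ P *ᵥ (x - mbar))) := by
    apply Integrable.mono'
      (g := fun x => 4 * (gaussianDensity mbar ((2:ℝ) • Sbar) x - q x - h x + (ab - ap) * q x))
    · exact (((hpInt.sub hqInt).sub hhInt).add (hqInt.const_mul _)).const_mul 4
    · exact (hqm.aemeasurable.mul
        (quadform_continuous mbar P).measurable.aemeasurable).aestronglyMeasurable
    · filter_upwards with x
      rw [Real.norm_eq_abs, abs_of_nonneg (mul_nonneg (hq0 x) (dotp_nonneg hP.posSemidef _))]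
      exact hΦbound x
  -- integrability of each component
  have hrz : ∀ z, Integrable (fun x => q x * (Real.log (gaussianDensity (m z) (S z) x)
      - Real.log (gaussianDensity mbar Sbar x))) := by
    intro z
    obtain ⟨α, β, hα, hβ, hbound⟩ := quad_comparison hP (hBz z).posSemidef (m z) mbar
    set az : ℝ := (-(1:ℝ)/2) * Real.log (((2 * Real.pi) • S z).det) with haz
    apply Integrable.mono'
      (g := fun x => (|az - ab| + β/2) * q x
        + ((α + 1)/2) * (q x * ((x - mbar) ⬝ᵥ P *ᵥ (x - mbar))))
    · exact (hqInt.const_mul _).add (hΦInt.const_mul _)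
    · exact (hqm.aemeasurable.mul
        (((Real.measurable_log.comp (gaussianDensity_continuous (m z) (S z)).measurable).sub
          (Real.measurable_log.comp
            (gaussianDensity_continuous mbar Sbar).measurable)).aemeasurable)).aestronglyMeasurable
    · filter_upwards with x
      rw [Real.norm_eq_abs, abs_mul, abs_of_nonneg (hq0 x)]
      have hr : Real.log (gaussianDensity (m z) (S z) x)
          - Real.log (gaussianDensity mbar Sbar x)
          = (az - ab) + ((-(1:ℝ)/2) * ((x - m z) ⬝ᵥ (S z)⁻¹ *ᵥ (x - m z))
            + (1/2) * ((x - mbar) ⬝ᵥ P *ᵥ (x - mbar))) := by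
        rw [log_gaussianDensity (hS z), log_gaussianDensity hSbar, hSbarInv, ← haz, ← hab]
        ring
      have hQz0 : 0 ≤ (x - m z) ⬝ᵥ (S z)⁻¹ *ᵥ (x - m z) :=
        dotp_nonneg (hBz z).posSemidef _
      have hQP0 : 0 ≤ (x - mbar) ⬝ᵥ P *ᵥ (x - mbar) := dotp_nonneg hP.posSemidef _
      have habs : |Real.log (gaussianDensity (m z) (S z) x)
          - Real.log (gaussianDensity mbar Sbar x)|
          ≤ |az - ab| + (1/2) * ((x - m z) ⬝ᵥ (S z)⁻¹ *ᵥ (x - m z))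
            + (1/2) * ((x - mbar) ⬝ᵥ P *ᵥ (x - mbar)) := by
        rw [hr, abs_le]
        constructor
        · nlinarith [neg_abs_le (az - ab)]
        · nlinarith [le_abs_self (az - ab)]
      calc q x * |Real.log (gaussianDensity (m z) (S z) x)
            - Real.log (gaussianDensity mbar Sbar x)|
          ≤ q x * (|az - ab| + (1/2) * (α * ((x - mbar) ⬝ᵥ P *ᵥ (x - mbar)) + β)
            + (1/2) * ((x - mbar) ⬝ᵥ P *ᵥ (x - mbar))) := by
            apply mul_le_mul_of_nonneg_left _ (hq0 x)
            refine le_trans habs ?_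
            nlinarith [hbound x]
        _ = (|az - ab| + β/2) * q x
            + ((α + 1)/2) * (q x * ((x - mbar) ⬝ᵥ P *ᵥ (x - mbar))) := by ring
  have hhz_eq : ∀ z, (fun x => Real.log (gaussianDensity (m z) (S z) x / q x) * q x)
      = fun x => q x * (Real.log (gaussianDensity (m z) (S z) x)
        - Real.log (gaussianDensity mbar Sbar x)) + h x := by
    intro z
    funext x
    by_cases hx : q x = 0
    · simp [hh, hx]
    · rw [Real.log_div (ne_of_gt (gaussianDensity_pos (hS z) (m z) x)) hx]
      simp only [hh, if_neg hx]
      ring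
  have hhzInt : ∀ z, Integrable
      (fun x => Real.log (gaussianDensity (m z) (S z) x / q x) * q x) := by
    intro z
    rw [hhz_eq z]
    exact (hrz z).add hhInt
  -- the objective equals ∫ h + logζ
  have hLHS : (∑ z, f z * ∫ x : Fin d → ℝ,
      Real.log (gaussianDensity (m z) (S z) x / q x) * q x) = (∫ x, h x) + logζ := by
    have e1 : ∀ z : Fin M, f z * (∫ x : Fin d → ℝ,
        Real.log (gaussianDensity (m z) (S z) x / q x) * q x)
        = ∫ x : Fin d → ℝ, f z * (Real.log (gaussianDensity (m z) (S z) x / q x) * q x) :=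
      fun z => (integral_const_mul _ _).symm
    rw [Finset.sum_congr rfl fun z _ => e1 z,
      ← integral_finset_sum _ (fun z _ => ((hhzInt z).const_mul (f z)))]
    have e2 : ∀ x, (∑ z, f z * (Real.log (gaussianDensity (m z) (S z) x / q x) * q x))
        = h x + logζ * q x := by
      intro x
      by_cases hx : q x = 0
      · simp [hh, hx]
      · have e3 : ∀ z : Fin M, f z * (Real.log (gaussianDensity (m z) (S z) x / q x) * q x)
            = (f z * Real.log (gaussianDensity (m z) (S z) x)) * q x
              - f z * (Real.log (q x) * q x) := by
          intro z
          rw [Real.log_div (ne_of_gt (gaussianDensity_pos (hS z) (m z) x)) hx]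
          ring
        rw [Finset.sum_congr rfl fun z _ => e3 z, Finset.sum_sub_distrib,
          ← Finset.sum_mul, ← Finset.sum_mul, hKI x, hf1]
        simp only [hh, if_neg hx]
        ring
    rw [show (fun x => ∑ z, f z * (Real.log (gaussianDensity (m z) (S z) x / q x) * q x))
        = fun x => h x + logζ * q x from funext e2,
      integral_add hhInt (hqInt.const_mul logζ), integral_const_mul, hq1, mul_one]
  refine ⟨?_, ?_, ?_⟩
  · rw [hLHS]; linarith
  · intro heq
    have hIh0 : (∫ x, h x) = 0 := by rw [hLHS] at heq; linarith
    set u : (Fin d → ℝ) → ℝ := fun x => (gaussianDensity mbar Sbar x - q x) - h x with hu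
    have huInt : Integrable u := hgq.sub hhInt
    have hu0 : ∀ x, 0 ≤ u x := fun x => by
      have := hGibbs x; simp only [hu]; linarith
    have huI : (∫ x, u x) = 0 := by
      simp only [hu]
      rw [integral_sub hgq hhInt, integral_sub hgbarInt hqInt, hgbarVal, hq1, hIh0]
      ring
    have hae := (integral_eq_zero_iff_of_nonneg hu0 huInt).mp huI
    filter_upwards [hae] with x hx
    have hx0 : u x = 0 := hx
    by_contra hne
    by_cases hq : q x = 0
    · have : u x = gaussianDensity mbar Sbar x := by simp [hu, hh, hq]
      have hgpos := gaussianDensity_pos hSbar mbar x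
      rw [hx0] at this
      linarith
    · have hqpos : 0 < q x := lt_of_le_of_ne (hq0 x) (Ne.symm hq)
      have hstrict := gibbs_pt_strict (gaussianDensity_pos hSbar mbar x) hqpos
        (fun hEq => hne hEq.symm)
      have hhx : h x = q x * (Real.log (gaussianDensity mbar Sbar x) - Real.log (q x)) := by
        simp only [hh, if_neg hq]
      have : u x > 0 := by
        simp only [hu]; rw [hhx]; linarith
      linarith [hx0 ▸ this]
  · intro hae
    have hh0 : (∫ x, h x) = 0 := by
      have hzero : h =ᵐ[volume] (fun _ => (0:ℝ)) := by
        filter_upwards [hae] with x hx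
        have hgpos := gaussianDensity_pos hSbar mbar x
        have hqx : q x ≠ 0 := by rw [hx]; exact ne_of_gt hgpos
        simp only [hh, if_neg hqx, hx]
        ring
      rw [integral_congr_ae hzero, integral_zero]
    rw [hLHS, hh0, zero_add]
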